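/- In the discrete Heisenberg group H₃ with word metric d from S = {a, b, a⁻¹, b⁻¹}: if w is a word with all letters in {a, b} representing the group element c^z b^y a^x, then d(e, c^z b^y a^x) = x + y = |w|; hence every word in the letters a, b is geodesic. -/

import Mathlib

/-- The discrete Heisenberg group `H₃`: `⟨x, y, z⟩` encodes the 3×3 upper unitriangular
integer matrix `(1 x z; 0 1 y; 0 0 1)`, with matrix multiplication. -/
@[ext] structure Heis where
  x : ℤ
  y : ℤ
  z : ℤ

namespace Heis

instance : Mul Heis := ⟨fun p q => ⟨p.x + q.x, p.y + q.y, p.z + q.z + p.x * q.y⟩⟩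
instance : One Heis := ⟨⟨0, 0, 0⟩⟩
instance : Inv Heis := ⟨fun p => ⟨-p.x, -p.y, p.x * p.y - p.z⟩⟩

theorem mul_def (p q : Heis) :
    p * q = ⟨p.x + q.x, p.y + q.y, p.z + q.z + p.x * q.y⟩ := rfl
theorem one_def : (1 : Heis) = ⟨0, 0, 0⟩ := rfl
theorem inv_def (p : Heis) : p⁻¹ = ⟨-p.x, -p.y, p.x * p.y - p.z⟩ := rfl

instance : Group Heis where
  mul_assoc p q r := by
    simp only [mul_def, mk.injEq]
    refine ⟨by ring, by ring, by ring⟩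
  one_mul p := by
    obtain ⟨px, py, pz⟩ := p
    simp only [one_def, mul_def, mk.injEq]
    refine ⟨by ring, by ring, by ring⟩
  mul_one p := by
    obtain ⟨px, py, pz⟩ := p
    simp only [one_def, mul_def, mk.injEq]
    refine ⟨by ring, by ring, by ring⟩
  inv_mul_cancel p := by
    obtain ⟨px, py, pz⟩ := p
    simp only [inv_def, mul_def, one_def, mk.injEq]
    refine ⟨by ring, by ring, by ring⟩

/-- The generator `a` (the elementary matrix with a `1` in position (1,2)). -/
def a : Heis := ⟨1, 0, 0⟩
/-- The generator `b` (the elementary matrix with a `1` in position (2,3)). -/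
def b : Heis := ⟨0, 1, 0⟩
/-- The commutator `c = [a,b] = a⁻¹b⁻¹ab` (the elementary matrix with a `1` in (1,3)). -/
def c : Heis := ⟨0, 0, 1⟩

/-- The standard generating set `S = {a, b, a⁻¹, b⁻¹}`. -/
def S : Set Heis := {a, b, a⁻¹, b⁻¹}

/-- The word metric for the generating set `S`: the length of the shortest word with
letters in `S` leading from `g` to `h` in the Cayley graph. -/
noncomputable def wdist (g h : Heis) : ℕ :=
  sInf {n | ∃ l : List Heis, (∀ s ∈ l, s ∈ S) ∧ l.length = n ∧ g * l.prod = h}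


end Heis

namespace Heis

theorem a_zpow (n : ℤ) : a ^ n = ⟨n, 0, 0⟩ := by
  induction n using Int.induction_on with
  | zero => rfl
  | succ k ih => rw [zpow_add_one, ih]; simp [a, mul_def]
  | pred k ih =>
      rw [sub_eq_add_neg, zpow_add, ih, zpow_neg_one]
      simp [a, inv_def, mul_def]

theorem b_zpow (n : ℤ) : b ^ n = ⟨0, n, 0⟩ := by
  induction n using Int.induction_on with
  | zero => rfl
  | succ k ih => rw [zpow_add_one, ih]; simp [b, mul_def]
  | pred k ih =>
      rw [sub_eq_add_neg, zpow_add, ih, zpow_neg_one]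
      simp [b, inv_def, mul_def]

theorem c_zpow (n : ℤ) : c ^ n = ⟨0, 0, n⟩ := by
  induction n using Int.induction_on with
  | zero => rfl
  | succ k ih => rw [zpow_add_one, ih]; simp [c, mul_def]
  | pred k ih =>
      rw [sub_eq_add_neg, zpow_add, ih, zpow_neg_one]
      simp [c, inv_def, mul_def]

theorem normal_form (x y z : ℤ) : c ^ z * b ^ y * a ^ x = ⟨x, y, z⟩ := by
  rw [a_zpow, b_zpow, c_zpow]
  simp [mul_def]

theorem key (w : List Heis) (hw : ∀ s ∈ w, s = a ∨ s = b) :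
    0 ≤ w.prod.x ∧ 0 ≤ w.prod.y ∧ 0 ≤ w.prod.z ∧
      w.prod.z ≤ w.prod.x * w.prod.y ∧ (w.length : ℤ) = w.prod.x + w.prod.y := by
  induction w with
  | nil => simp [one_def]
  | cons s t ih =>
      obtain ⟨hx, hy, hz, hzxy, hlen⟩ := ih (fun u hu => hw u (List.mem_cons_of_mem _ hu))
      rcases hw s List.mem_cons_self with hs | hs <;> subst hs <;>
        simp only [List.prod_cons, a, b, mul_def, List.length_cons] <;>
        refine ⟨by omega, by omega, by positivity, ?_, by push_cast; omega⟩ <;> nlinarith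

end Heis

open Heis in
/-- Assuming case I.2.1 of Blachère's formula: if `w` is a word with all letters in `{a,b}`
representing `c^z b^y a^x`, then `d(e, c^z b^y a^x) = x + y = |w|`; hence every word in the
letters `a, b` is geodesic. -/
theorem stmt10
    (hB : ∀ x y z : ℤ, 0 ≤ z * y * x → |z| ≤ max (x ^ 2) (y ^ 2) → |z| ≤ |x * y| →
      (wdist 1 (c ^ z * b ^ y * a ^ x) : ℤ) = |x| + |y|)
    (w : List Heis) (hw : ∀ s ∈ w, s = a ∨ s = b)
    (x y z : ℤ) (hrep : w.prod = c ^ z * b ^ y * a ^ x) :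
    (wdist 1 w.prod : ℤ) = x + y ∧ (w.length : ℤ) = x + y := by
  obtain ⟨hx, hy, hz, hzxy, hlen⟩ := key w hw
  rw [normal_form] at hrep
  have hxx : w.prod.x = x := by rw [hrep]
  have hyy : w.prod.y = y := by rw [hrep]
  have hzz : w.prod.z = z := by rw [hrep]
  rw [hxx] at hx; rw [hyy] at hy
  rw [hxx, hyy] at hlen
  rw [hxx, hyy, hzz] at hzxy
  rw [hzz] at hz
  have h1 : 0 ≤ z * y * x := by positivity
  have h2 : |z| ≤ max (x ^ 2) (y ^ 2) := by
    rw [abs_of_nonneg hz]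
    rcases le_total x y with h | h
    · exact le_trans hzxy (le_max_of_le_right (by nlinarith))
    · exact le_trans hzxy (le_max_of_le_left (by nlinarith))
  have h3 : |z| ≤ |x * y| := by
    rw [abs_of_nonneg hz, abs_of_nonneg (by positivity)]; exact hzxy
  have := hB x y z h1 h2 h3
  rw [abs_of_nonneg hx, abs_of_nonneg hy] at this
  rw [hrep, ← normal_form]
  exact ⟨this, hlen⟩
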